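/- Let P¹, P² ⊆ ℝ³ be as follows: P¹ = { (x,y,z) : √2·x ≥ y ≥ 0, z = 0 }, P² = { (x,y,z) : √2·x ≥ y ≥ 0, x ≥ 1/2, z = 1 }, and X = (P¹ ∪ P²) ∩ ℤ³. Consider the program minimize −z subject to −√2·x + y ≥ 0, (x,y,z) ∈ X. Then the Lagrangian dual value v^L = sup_{λ≥0} inf_{(x,y,z)∈X}(−z + λ(√2·x − y)) equals −1, whereas the optimal value over closure(conv X) equals 0; hence v^L < v̄*. -/

import Mathlib

noncomputable def pell : ℕ → ℤ × ℤ
  | 0 => (1, 1)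
  | n+1 => (3 * (pell n).1 + 2 * (pell n).2, 4 * (pell n).1 + 3 * (pell n).2)

lemma pell_prop (n : ℕ) : 2 * (pell n).1^2 - (pell n).2^2 = 1 ∧ (n:ℤ) + 1 ≤ (pell n).1 ∧ 1 ≤ (pell n).2 := by
  induction n with
  | zero => simp [pell]
  | succ n ih =>
    obtain ⟨h1, h2, h3⟩ := ih
    refine ⟨?_, ?_, ?_⟩
    · show 2 * (3 * (pell n).1 + 2 * (pell n).2)^2 - (4 * (pell n).1 + 3 * (pell n).2)^2 = 1
      nlinarith [h1]
    · show (n:ℤ) + 1 + 1 ≤ 3 * (pell n).1 + 2 * (pell n).2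
      push_cast
      linarith
    · show (1:ℤ) ≤ 4 * (pell n).1 + 3 * (pell n).2
      linarith

lemma sqrt_cs (A B C D : ℝ) (hA : 0 ≤ A) (hB : 0 ≤ B) (hC : 0 ≤ C) (hD : 0 ≤ D) :
    Real.sqrt A * Real.sqrt B + Real.sqrt C * Real.sqrt D ≤ Real.sqrt ((A+C) * (B+D)) := by
  have h1 : 0 ≤ Real.sqrt A * Real.sqrt B + Real.sqrt C * Real.sqrt D := by positivity
  rw [← Real.sqrt_sq h1]
  apply Real.sqrt_le_sqrt
  nlinarith [Real.sq_sqrt hA, Real.sq_sqrt hB, Real.sq_sqrt hC, Real.sq_sqrt hD,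
    sq_nonneg (Real.sqrt A * Real.sqrt D - Real.sqrt C * Real.sqrt B),
    Real.sqrt_nonneg A, Real.sqrt_nonneg B, Real.sqrt_nonneg C, Real.sqrt_nonneg D]

noncomputable def Sset : Set (ℝ × ℝ × ℝ) :=
  {p | 0 ≤ Real.sqrt 2 * p.1 - p.2.1 ∧ 0 ≤ p.1 ∧
    p.2.2 ≤ Real.sqrt ((2 * Real.sqrt 2) * ((Real.sqrt 2 * p.1 - p.2.1) * p.1))}

lemma Sset_convex : Convex ℝ Sset := by
  rintro p ⟨hp1, hp2, hp3⟩ q ⟨hq1, hq2, hq3⟩ t s ht hs hts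
  have hc : (0:ℝ) ≤ 2 * Real.sqrt 2 := by positivity
  refine ⟨?_, ?_, ?_⟩
  · show 0 ≤ Real.sqrt 2 * (t * p.1 + s * q.1) - (t * p.2.1 + s * q.2.1)
    nlinarith
  · show 0 ≤ t * p.1 + s * q.1
    nlinarith
  · show t * p.2.2 + s * q.2.2 ≤
      Real.sqrt ((2 * Real.sqrt 2) * ((Real.sqrt 2 * (t * p.1 + s * q.1) - (t * p.2.1 + s * q.2.1)) * (t * p.1 + s * q.1)))
    set c := 2 * Real.sqrt 2 with hcdef
    set dp := Real.sqrt 2 * p.1 - p.2.1 with hdp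
    set dq := Real.sqrt 2 * q.1 - q.2.1 with hdq
    have key : t * Real.sqrt (c * (dp * p.1)) + s * Real.sqrt (c * (dq * q.1)) ≤
        Real.sqrt (c * ((t * dp + s * dq) * (t * p.1 + s * q.1))) := by
      have e1 : t * Real.sqrt (c * (dp * p.1)) =
          Real.sqrt (c * (t * dp)) * Real.sqrt (t * p.1) := by
        rw [← Real.sqrt_mul (by positivity)]
        rw [show c * (t * dp) * (t * p.1) = t^2 * (c * (dp * p.1)) by ring]
        rw [Real.sqrt_mul (sq_nonneg t), Real.sqrt_sq ht]
      have e2 : s * Real.sqrt (c * (dq * q.1)) =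
          Real.sqrt (c * (s * dq)) * Real.sqrt (s * q.1) := by
        rw [← Real.sqrt_mul (by positivity)]
        rw [show c * (s * dq) * (s * q.1) = s^2 * (c * (dq * q.1)) by ring]
        rw [Real.sqrt_mul (sq_nonneg s), Real.sqrt_sq hs]
      rw [e1, e2]
      have := sqrt_cs (c * (t * dp)) (t * p.1) (c * (s * dq)) (s * q.1)
        (by positivity) (by positivity) (by positivity) (by positivity)
      calc Real.sqrt (c * (t * dp)) * Real.sqrt (t * p.1) + Real.sqrt (c * (s * dq)) * Real.sqrt (s * q.1)
          ≤ Real.sqrt ((c * (t * dp) + c * (s * dq)) * (t * p.1 + s * q.1)) := this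
        _ = Real.sqrt (c * ((t * dp + s * dq) * (t * p.1 + s * q.1))) := by ring_nf
    have h5 : t * p.2.2 + s * q.2.2 ≤ t * Real.sqrt (c * (dp * p.1)) + s * Real.sqrt (c * (dq * q.1)) := by
      have := mul_le_mul_of_nonneg_left hp3 ht
      have := mul_le_mul_of_nonneg_left hq3 hs
      linarith
    have e3 : Real.sqrt 2 * (t * p.1 + s * q.1) - (t * p.2.1 + s * q.2.1) = t * dp + s * dq := by
      rw [hdp, hdq]; ring
    rw [e3]
    exact le_trans h5 key

lemma Sset_closed : IsClosed Sset := by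
  have : Sset = {p : ℝ × ℝ × ℝ | 0 ≤ Real.sqrt 2 * p.1 - p.2.1} ∩
      ({p : ℝ × ℝ × ℝ | 0 ≤ p.1} ∩
       {p : ℝ × ℝ × ℝ | p.2.2 - Real.sqrt ((2 * Real.sqrt 2) * ((Real.sqrt 2 * p.1 - p.2.1) * p.1)) ≤ 0}) := by
    ext p
    simp only [Sset, Set.mem_setOf_eq, Set.mem_inter_iff, sub_nonpos]
  rw [this]
  refine IsClosed.inter ?_ (IsClosed.inter ?_ ?_)
  · exact isClosed_le continuous_const (by fun_prop)
  · exact isClosed_le continuous_const (by fun_prop)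
  · exact isClosed_le (by fun_prop) continuous_const

lemma key_ineq (a b : ℤ) (hb0 : (0:ℝ) ≤ (b:ℝ)) (hba : (b:ℝ) ≤ Real.sqrt 2 * (a:ℝ))
    (ha : (1:ℝ)/2 ≤ (a:ℝ)) :
    1 ≤ 2 * Real.sqrt 2 * ((Real.sqrt 2 * (a:ℝ) - (b:ℝ)) * (a:ℝ)) := by
  have h2 : Real.sqrt 2 ^ 2 = 2 := Real.sq_sqrt (by norm_num)
  have hs2 : (0:ℝ) < Real.sqrt 2 := by positivity
  have ha1 : (1:ℤ) ≤ a := by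
    by_contra h
    push_neg at h
    have h0 : a ≤ 0 := by omega
    have : (a:ℝ) ≤ 0 := by exact_mod_cast h0
    linarith
  have haR : (1:ℝ) ≤ (a:ℝ) := by exact_mod_cast ha1
  have haR0 : (a:ℝ) ≠ 0 := by linarith
  have hbsq : (b:ℝ)^2 ≤ 2*(a:ℝ)^2 := by nlinarith
  have hk0 : (0:ℤ) ≤ 2*a^2 - b^2 := by
    have : ((b^2:ℤ):ℝ) ≤ ((2*a^2:ℤ):ℝ) := by push_cast; linarith
    have : b^2 ≤ 2*a^2 := by exact_mod_cast this
    omega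
  have hkne : 2*a^2 - b^2 ≠ 0 := by
    intro h
    have hb2 : (b:ℝ)^2 = 2*(a:ℝ)^2 := by
      have : ((b^2:ℤ):ℝ) = ((2*a^2:ℤ):ℝ) := by exact_mod_cast congrArg (fun x : ℤ => (x:ℝ)) (by omega : b^2 = 2*a^2)
      push_cast at this
      linarith
    have hbe : (b:ℝ) = Real.sqrt 2 * (a:ℝ) := by
      have h1 : (b:ℝ) = Real.sqrt ((b:ℝ)^2) := (Real.sqrt_sq hb0).symm
      rw [hb2, show (2:ℝ)*(a:ℝ)^2 = 2 * (a:ℝ)^2 from rfl, Real.sqrt_mul (by norm_num : (0:ℝ) ≤ 2),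
        Real.sqrt_sq (by linarith : (0:ℝ) ≤ (a:ℝ))] at h1
      exact h1
    have hrat : Real.sqrt 2 = (b:ℝ)/(a:ℝ) := by field_simp [hbe]; linarith
    exact irrational_sqrt_two ⟨(b:ℚ)/(a:ℚ), by push_cast; rw [hrat]⟩
  have hk1 : (1:ℝ) ≤ 2*(a:ℝ)^2 - (b:ℝ)^2 := by
    have h1 : (1:ℤ) ≤ 2*a^2 - b^2 := by omega
    have : ((1:ℤ):ℝ) ≤ ((2*a^2 - b^2 : ℤ):ℝ) := by exact_mod_cast h1
    push_cast at this
    linarith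
  have heps : 0 ≤ Real.sqrt 2 * (a:ℝ) - (b:ℝ) := by linarith
  have h3 : (Real.sqrt 2 * (a:ℝ) - (b:ℝ)) * (Real.sqrt 2 * (a:ℝ) + (b:ℝ)) = 2*(a:ℝ)^2 - (b:ℝ)^2 := by
    have : (Real.sqrt 2 * (a:ℝ) - (b:ℝ)) * (Real.sqrt 2 * (a:ℝ) + (b:ℝ))
        = Real.sqrt 2 ^2 * (a:ℝ)^2 - (b:ℝ)^2 := by ring
    rw [this, h2]
  have h4 : Real.sqrt 2 * (a:ℝ) + (b:ℝ) ≤ 2 * Real.sqrt 2 * (a:ℝ) := by nlinarith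
  nlinarith [mul_le_mul_of_nonneg_left h4 heps]

def Xexp : Set (ℝ × ℝ × ℝ) :=
  ({p : ℝ × ℝ × ℝ | p.2.1 ≤ Real.sqrt 2 * p.1 ∧ 0 ≤ p.2.1 ∧ p.2.2 = 0} ∪
   {p : ℝ × ℝ × ℝ | p.2.1 ≤ Real.sqrt 2 * p.1 ∧ 0 ≤ p.2.1 ∧ (1:ℝ)/2 ≤ p.1 ∧ p.2.2 = 1}) ∩
  {p : ℝ × ℝ × ℝ | ∃ a b c : ℤ, p = ((a:ℝ), (b:ℝ), (c:ℝ))}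

lemma sqrt2_pos : (0:ℝ) < Real.sqrt 2 := by positivity

lemma Xexp_subset_S : Xexp ⊆ Sset := by
  rintro p ⟨hu, a, b, c, hp⟩
  subst hp
  simp only [Set.mem_union, Set.mem_setOf_eq] at hu
  have hs2 := sqrt2_pos
  rcases hu with ⟨h1, h2, h3⟩ | ⟨h1, h2, h4, h3⟩
  · refine ⟨by simpa using (by linarith : (0:ℝ) ≤ Real.sqrt 2 * a - b), ?_, ?_⟩
    · show (0:ℝ) ≤ (a:ℝ)
      by_contra h
      push_neg at h
      nlinarith
    · show (c:ℝ) ≤ _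
      rw [h3]
      exact Real.sqrt_nonneg _
  · refine ⟨by simpa using (by linarith : (0:ℝ) ≤ Real.sqrt 2 * a - b), by
      show (0:ℝ) ≤ (a:ℝ); linarith, ?_⟩
    show (c:ℝ) ≤ _
    rw [h3]
    have hk := key_ineq a b h2 h1 h4
    have := Real.sqrt_le_sqrt hk
    rwa [Real.sqrt_one] at this

lemma closure_conv_subset : closure (convexHull ℝ Xexp) ⊆ Sset :=
  closure_minimal (convexHull_min Xexp_subset_S Sset_convex) Sset_closed

lemma pell_real (n : ℕ) :
    (0:ℝ) ≤ ((pell n).2 : ℝ) ∧ ((pell n).2 : ℝ) ≤ Real.sqrt 2 * ((pell n).1 : ℝ) ∧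
    (1:ℝ)/2 ≤ ((pell n).1 : ℝ) ∧
    Real.sqrt 2 * ((pell n).1 : ℝ) - ((pell n).2 : ℝ) ≤ 1/((n:ℝ)+1) := by
  obtain ⟨h1, h2, h3⟩ := pell_prop n
  have haR : (n:ℝ) + 1 ≤ ((pell n).1 : ℝ) := by exact_mod_cast h2
  have hbR : (1:ℝ) ≤ ((pell n).2 : ℝ) := by exact_mod_cast h3
  have hinv : 2*((pell n).1 : ℝ)^2 - ((pell n).2 : ℝ)^2 = 1 := by
    have := congrArg (fun x : ℤ => (x:ℝ)) h1
    push_cast at this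
    linarith
  set a := ((pell n).1 : ℝ) with hadef
  set b := ((pell n).2 : ℝ) with hbdef
  have hsq : Real.sqrt 2 ^ 2 = 2 := Real.sq_sqrt (by norm_num)
  have h12 : (1:ℝ) ≤ Real.sqrt 2 := by nlinarith [sqrt2_pos]
  have han : (0:ℝ) ≤ (n:ℝ) := Nat.cast_nonneg n
  have ha1 : (1:ℝ) ≤ a := by linarith
  have hpos : (0:ℝ) < Real.sqrt 2 * a + b := by nlinarith
  have h3' : (Real.sqrt 2 * a - b) * (Real.sqrt 2 * a + b) = 1 := by
    have : (Real.sqrt 2 * a - b) * (Real.sqrt 2 * a + b) = Real.sqrt 2^2 * a^2 - b^2 := by ring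
    rw [this, hsq]; linarith
  have heps : Real.sqrt 2 * a - b = 1 / (Real.sqrt 2 * a + b) := by
    field_simp
    linarith [h3']
  have hepspos : 0 < Real.sqrt 2 * a - b := by
    rw [heps]; positivity
  refine ⟨by linarith, by linarith, by linarith, ?_⟩
  rw [heps]
  apply one_div_le_one_div_of_le (by positivity)
  nlinarith

theorem example2_gap
    (P1 P2 X : Set (ℝ × ℝ × ℝ))
    (hP1 : P1 = {p : ℝ × ℝ × ℝ | p.2.1 ≤ Real.sqrt 2 * p.1 ∧ 0 ≤ p.2.1 ∧ p.2.2 = 0})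
    (hP2 : P2 = {p : ℝ × ℝ × ℝ | p.2.1 ≤ Real.sqrt 2 * p.1 ∧ 0 ≤ p.2.1 ∧
      (1 : ℝ) / 2 ≤ p.1 ∧ p.2.2 = 1})
    (hX : X = (P1 ∪ P2) ∩ {p : ℝ × ℝ × ℝ | ∃ a b c : ℤ,
      p = ((a : ℝ), (b : ℝ), (c : ℝ))}) :
    sSup ((fun lam : ℝ =>
        sInf ((fun p : ℝ × ℝ × ℝ =>
          ((-p.2.2 + lam * (Real.sqrt 2 * p.1 - p.2.1) : ℝ) : EReal)) '' X)) ''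
        {lam : ℝ | 0 ≤ lam}) = ((-1 : ℝ) : EReal) ∧
    sInf ((fun p : ℝ × ℝ × ℝ => ((-p.2.2 : ℝ) : EReal)) ''
        {p ∈ closure (convexHull ℝ X) | Real.sqrt 2 * p.1 ≤ p.2.1}) = (0 : EReal) ∧
    sSup ((fun lam : ℝ =>
        sInf ((fun p : ℝ × ℝ × ℝ =>
          ((-p.2.2 + lam * (Real.sqrt 2 * p.1 - p.2.1) : ℝ) : EReal)) '' X)) ''
        {lam : ℝ | 0 ≤ lam}) <
      sInf ((fun p : ℝ × ℝ × ℝ => ((-p.2.2 : ℝ) : EReal)) ''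
        {p ∈ closure (convexHull ℝ X) | Real.sqrt 2 * p.1 ≤ p.2.1}) := by
  subst hP1 hP2 hX
  have hXeq : ({p : ℝ × ℝ × ℝ | p.2.1 ≤ Real.sqrt 2 * p.1 ∧ 0 ≤ p.2.1 ∧ p.2.2 = 0} ∪
      {p : ℝ × ℝ × ℝ | p.2.1 ≤ Real.sqrt 2 * p.1 ∧ 0 ≤ p.2.1 ∧
        (1 : ℝ) / 2 ≤ p.1 ∧ p.2.2 = 1}) ∩ {p : ℝ × ℝ × ℝ | ∃ a b c : ℤ,
      p = ((a : ℝ), (b : ℝ), (c : ℝ))} = Xexp := rfl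
  rw [hXeq]
  -- the Lagrangian dual function is constantly -1 on lam ≥ 0
  have hlag : ∀ lam : ℝ, 0 ≤ lam →
      sInf ((fun p : ℝ × ℝ × ℝ =>
        ((-p.2.2 + lam * (Real.sqrt 2 * p.1 - p.2.1) : ℝ) : EReal)) '' Xexp)
      = ((-1 : ℝ) : EReal) := by
    intro lam hlam
    apply le_antisymm
    · -- sInf ≤ -1 using Pell points
      by_contra h
      push_neg at h
      obtain ⟨w, hw1, hw2⟩ := EReal.lt_iff_exists_real_btwn.mp h
      have hw1' : (-1:ℝ) < w := by exact_mod_cast hw1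
      have hw10 : (0:ℝ) < w + 1 := by linarith
      obtain ⟨n, hn⟩ := exists_nat_gt (lam / (w + 1))
      obtain ⟨hb0, hba, hah, heps⟩ := pell_real n
      set a := ((pell n).1 : ℝ)
      set b := ((pell n).2 : ℝ)
      have hmem : ((a : ℝ), (b : ℝ), (1 : ℝ)) ∈ Xexp := by
        refine ⟨Or.inr ⟨hba, hb0, hah, rfl⟩, (pell n).1, (pell n).2, 1, by push_cast; rfl⟩
      have hle : sInf ((fun p : ℝ × ℝ × ℝ =>
          ((-p.2.2 + lam * (Real.sqrt 2 * p.1 - p.2.1) : ℝ) : EReal)) '' Xexp)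
          ≤ ((-1 + lam * (Real.sqrt 2 * a - b) : ℝ) : EReal) :=
        sInf_le ⟨_, hmem, rfl⟩
      have hval : -1 + lam * (Real.sqrt 2 * a - b) < w := by
        have h1 : lam / (w+1) < (n:ℝ) := hn
        have h2 : lam < ((n:ℝ)+1) * (w+1) := by
          rw [div_lt_iff₀ hw10] at h1
          nlinarith [Nat.cast_nonneg (α := ℝ) n]
        have h3 : lam * (Real.sqrt 2 * a - b) ≤ lam * (1/((n:ℝ)+1)) := by
          apply mul_le_mul_of_nonneg_left heps hlam
        have h4 : lam * (1/((n:ℝ)+1)) < w + 1 := by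
          rw [mul_one_div, div_lt_iff₀ (by positivity : (0:ℝ) < (n:ℝ)+1)]
          linarith
        linarith
      have : ((w:ℝ) : EReal) < ((-1 + lam * (Real.sqrt 2 * a - b) : ℝ) : EReal) :=
        lt_of_lt_of_le hw2 hle
      have := EReal.coe_lt_coe_iff.mp this
      linarith
    · -- -1 ≤ every value
      apply le_sInf
      rintro v ⟨p, ⟨hu, -⟩, rfl⟩
      have hs2 := sqrt2_pos
      rcases hu with ⟨h1, h2, h3⟩ | ⟨h1, h2, h4, h3⟩ <;>
      · rw [EReal.coe_le_coe_iff]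
        rw [h3]
        nlinarith [mul_nonneg hlam (by linarith : (0:ℝ) ≤ Real.sqrt 2 * p.1 - p.2.1)]
  have hA : sSup ((fun lam : ℝ =>
      sInf ((fun p : ℝ × ℝ × ℝ =>
        ((-p.2.2 + lam * (Real.sqrt 2 * p.1 - p.2.1) : ℝ) : EReal)) '' Xexp)) ''
      {lam : ℝ | 0 ≤ lam}) = ((-1 : ℝ) : EReal) := by
    apply le_antisymm
    · apply sSup_le
      rintro v ⟨lam, hlam, rfl⟩
      exact le_of_eq (hlag lam hlam)
    · apply le_sSup
      exact ⟨0, le_refl (0:ℝ), hlag 0 le_rfl⟩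
  have hB : sInf ((fun p : ℝ × ℝ × ℝ => ((-p.2.2 : ℝ) : EReal)) ''
      {p ∈ closure (convexHull ℝ Xexp) | Real.sqrt 2 * p.1 ≤ p.2.1}) = (0 : EReal) := by
    apply le_antisymm
    · have h0X : ((0:ℝ), (0:ℝ), (0:ℝ)) ∈ Xexp := by
        refine ⟨Or.inl ⟨by simp, le_refl 0, rfl⟩, 0, 0, 0, by push_cast; rfl⟩
      have h0F : ((0:ℝ), (0:ℝ), (0:ℝ)) ∈
          {p ∈ closure (convexHull ℝ Xexp) | Real.sqrt 2 * p.1 ≤ p.2.1} := by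
        exact ⟨subset_closure (subset_convexHull ℝ _ h0X), by simp⟩
      have : (0 : EReal) ∈ (fun p : ℝ × ℝ × ℝ => ((-p.2.2 : ℝ) : EReal)) ''
          {p ∈ closure (convexHull ℝ Xexp) | Real.sqrt 2 * p.1 ≤ p.2.1} :=
        ⟨_, h0F, by norm_num⟩
      exact sInf_le this
    · apply le_sInf
      rintro v ⟨p, ⟨hpc, hpl⟩, rfl⟩
      obtain ⟨hd, hx, hz⟩ := closure_conv_subset hpc
      have hd0 : Real.sqrt 2 * p.1 - p.2.1 = 0 := le_antisymm (by linarith) hd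
      rw [hd0] at hz
      simp only [zero_mul, mul_zero, Real.sqrt_zero] at hz
      have h0 : (0:ℝ) ≤ -p.2.2 := by linarith
      show (0:EReal) ≤ ((-p.2.2 : ℝ) : EReal)
      rw [← EReal.coe_zero]
      exact EReal.coe_le_coe_iff.mpr h0
  refine ⟨hA, hB, ?_⟩
  rw [hA, hB, ← EReal.coe_zero]
  exact EReal.coe_lt_coe_iff.mpr (by norm_num)
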